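/- Stein kernel for the von Mises-Fisher distribution on SO(N): for the density p(X|F) ∝ exp(tr(FᵀX)) with parameter F ∈ ℝ^{N×N}, the Riemannian gradient of log p at X is X𝒜(XᵀF), and the Stein kernel is k_p^{vMF}(X,Y) = c(X,Y) + tr[𝒜(Xᵀ(F + τY))ᵀ 𝒜(Yᵀ(F + τX))] · e^{τ tr(XᵀY)}, where c(X,Y) = (τ/2)(N−1) tr(XᵀY) e^{τ tr(XᵀY)}. -/

import Mathlib

open Matrix
open scoped Kronecker

noncomputable section

/-- The orthonormal basis element `E_{ij}` (for `i < j`) of the Lie algebra `so(N)`: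
`√2/2` at entry `(i,j)`, `−√2/2` at `(j,i)`, zeros elsewhere. -/
def Eb (N : ℕ) (i j : Fin N) : Matrix (Fin N) (Fin N) ℝ :=
  (Real.sqrt 2 / 2) • (single i j (1 : ℝ) - single j i (1 : ℝ))

/-- Derivative of `h` at `X` along the left-invariant vector field `X ↦ X·B` on `SO(N)`:
`d/dt h(X exp(tB)) |_{t=0}`. -/
def dirDeriv {N : ℕ} (h : Matrix (Fin N) (Fin N) ℝ → ℝ)
    (B X : Matrix (Fin N) (Fin N) ℝ) : ℝ :=
  deriv (fun t : ℝ => h (X * NormedSpace.exp (t • B))) 0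

/-- Skew-symmetrization `𝒜(A) = (A − Aᵀ)/2`. -/
def skewPart {N : ℕ} (A : Matrix (Fin N) (Fin N) ℝ) : Matrix (Fin N) (Fin N) ℝ :=
  (2⁻¹ : ℝ) • (A - Aᵀ)

/-- The kernel `k(X,Y) = exp(τ tr(XᵀY))` on `SO(N)`. -/
def kSON {N : ℕ} (τ : ℝ) (X Y : Matrix (Fin N) (Fin N) ℝ) : ℝ :=
  Real.exp (τ * (Xᵀ * Y).trace)

/-- The Stein operator component `A_p^{ij} h = D^{ij} h + h · D^{ij} log p`, where
`D^{ij}` is the derivation along the left-invariant field `X ↦ X E_{ij}`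
(the modular term vanishes: `SO(N)` is compact, hence unimodular). -/
def steinSON {N : ℕ} (p : Matrix (Fin N) (Fin N) ℝ → ℝ) (i j : Fin N)
    (h : Matrix (Fin N) (Fin N) ℝ → ℝ) (X : Matrix (Fin N) (Fin N) ℝ) : ℝ :=
  dirDeriv h (Eb N i j) X + h X * dirDeriv (fun Z => Real.log (p Z)) (Eb N i j) X

/-- The Stein kernel `k_p(X,Y) = Σ_{i<j} Ã_p^{ij} A_p^{ij} k(X,Y)`, `A_p^{ij}` acting on
the first argument of `k` and `Ã_p^{ij}` on the second. -/
def kpSON {N : ℕ} (τ : ℝ) (p : Matrix (Fin N) (Fin N) ℝ → ℝ)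
    (X Y : Matrix (Fin N) (Fin N) ℝ) : ℝ :=
  ∑ i : Fin N, ∑ j : Fin N, if i < j then
    steinSON p i j (fun Y' => steinSON p i j (fun X' => kSON τ X' Y') X) Y
  else 0

/-- The `p`-independent term `c(X,Y) = (τ/2)(N−1) tr(XᵀY) e^{τ tr(XᵀY)}`. -/
def cSON {N : ℕ} (τ : ℝ) (X Y : Matrix (Fin N) (Fin N) ℝ) : ℝ :=
  (τ / 2) * ((N : ℝ) - 1) * (Xᵀ * Y).trace * Real.exp (τ * (Xᵀ * Y).trace)


section DerivHelpers
attribute [local instance] Matrix.linftyOpNormedAddCommGroup Matrix.linftyOpNormedRing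
  Matrix.linftyOpNormedAlgebra

lemma hasDerivAt_traceMulExp {N : ℕ} (M X B : Matrix (Fin N) (Fin N) ℝ) :
    HasDerivAt (fun t : ℝ => (M * (X * NormedSpace.exp (t • B))).trace)
      ((M * (X * B)).trace) 0 := by
  have h : HasDerivAt (fun t : ℝ => NormedSpace.exp (t • B)) B 0 := by
    have h0 := hasDerivAt_exp_smul_const (𝕂 := ℝ) B (0 : ℝ)
    simp at h0
    exact h0
  letI : NormedSpace ℝ (Matrix (Fin N) (Fin N) ℝ) := Matrix.linftyOpNormedSpace
  let L : Matrix (Fin N) (Fin N) ℝ →ₗ[ℝ] ℝ :=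
    (Matrix.traceLinearMap (Fin N) ℝ ℝ).comp
      ((LinearMap.mulLeft ℝ M).comp (LinearMap.mulLeft ℝ X))
  have hL := (LinearMap.toContinuousLinearMap L).hasFDerivAt
    (x := (NormedSpace.exp ((0:ℝ) • B)))
  have := hL.comp_hasDerivAt 0 h
  simp [L, Matrix.mul_assoc] at this
  exact this

end DerivHelpers

lemma tr_transp {N : ℕ} (A B : Matrix (Fin N) (Fin N) ℝ) :
    (Aᵀ * B).trace = (Bᵀ * A).trace := by
  rw [← Matrix.trace_transpose (Aᵀ * B), Matrix.transpose_mul, Matrix.transpose_transpose,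
    Matrix.trace_mul_comm]

lemma dirDeriv_logp {N : ℕ} (F : Matrix (Fin N) (Fin N) ℝ)
    (p : Matrix (Fin N) (Fin N) ℝ → ℝ) (C : ℝ) (hC : 0 < C)
    (hp : ∀ X, p X = C * Real.exp ((Fᵀ * X).trace))
    (B X : Matrix (Fin N) (Fin N) ℝ) :
    dirDeriv (fun Z => Real.log (p Z)) B X = (Fᵀ * (X * B)).trace := by
  unfold dirDeriv
  have hfun : (fun t : ℝ => Real.log (p (X * NormedSpace.exp (t • B))))
      = fun t : ℝ => Real.log C + (Fᵀ * (X * NormedSpace.exp (t • B))).trace := by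
    funext t
    rw [hp, Real.log_mul hC.ne' (Real.exp_ne_zero _), Real.log_exp]
  rw [hfun]
  exact ((hasDerivAt_traceMulExp Fᵀ X B).const_add (Real.log C)).deriv

lemma inner_stein {N : ℕ} (τ : ℝ) (F : Matrix (Fin N) (Fin N) ℝ)
    (p : Matrix (Fin N) (Fin N) ℝ → ℝ) (C : ℝ) (hC : 0 < C)
    (hp : ∀ X, p X = C * Real.exp ((Fᵀ * X).trace))
    (E X Y' : Matrix (Fin N) (Fin N) ℝ) :
    dirDeriv (fun X' => kSON τ X' Y') E X + kSON τ X Y' *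
        dirDeriv (fun Z => Real.log (p Z)) E X
      = (τ * ((X * E)ᵀ * Y').trace + (Fᵀ * (X * E)).trace)
          * Real.exp (τ * (Xᵀ * Y').trace) := by
  rw [dirDeriv_logp F p C hC hp]
  have h1 : dirDeriv (fun X' => kSON τ X' Y') E X
      = τ * ((Y'ᵀ * (X * E)).trace) * Real.exp (τ * (Y'ᵀ * X).trace) := by
    unfold dirDeriv kSON
    have hfun : (fun t : ℝ => Real.exp (τ * ((X * NormedSpace.exp (t • E))ᵀ * Y').trace))
        = fun t : ℝ => Real.exp (τ * (Y'ᵀ * (X * NormedSpace.exp (t • E))).trace) := by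
      funext t; rw [tr_transp]
    rw [hfun]
    have h := ((hasDerivAt_traceMulExp Y'ᵀ X E).const_mul τ).exp.deriv
    simp only [zero_smul, NormedSpace.exp_zero, mul_one] at h
    rw [h]; ring
  rw [h1, tr_transp Y' (X*E), tr_transp Y' X]
  unfold kSON
  ring

lemma term_eq {N : ℕ} (τ : ℝ) (F : Matrix (Fin N) (Fin N) ℝ)
    (p : Matrix (Fin N) (Fin N) ℝ → ℝ) (C : ℝ) (hC : 0 < C)
    (hp : ∀ X, p X = C * Real.exp ((Fᵀ * X).trace))
    (i j : Fin N) (X Y : Matrix (Fin N) (Fin N) ℝ) :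
    steinSON p i j (fun Y' => steinSON p i j (fun X' => kSON τ X' Y') X) Y
      = (τ * ((X * Eb N i j)ᵀ * (Y * Eb N i j)).trace
          + (τ * ((X * Eb N i j)ᵀ * Y).trace + (Fᵀ * (X * Eb N i j)).trace)
          * (τ * (Xᵀ * (Y * Eb N i j)).trace + (Fᵀ * (Y * Eb N i j)).trace))
        * Real.exp (τ * (Xᵀ * Y).trace) := by
  set E := Eb N i j with hE
  have hg : (fun Y' => steinSON p i j (fun X' => kSON τ X' Y') X)
      = fun Y' => (τ * ((X * E)ᵀ * Y').trace + (Fᵀ * (X * E)).trace)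
          * Real.exp (τ * (Xᵀ * Y').trace) := by
    funext Y'
    exact inner_stein τ F p C hC hp E X Y'
  rw [hg]
  unfold steinSON
  rw [dirDeriv_logp F p C hC hp]
  simp only []
  have hd : dirDeriv (fun Y' => (τ * ((X * E)ᵀ * Y').trace + (Fᵀ * (X * E)).trace)
      * Real.exp (τ * (Xᵀ * Y').trace)) E Y
      = τ * ((X * E)ᵀ * (Y * E)).trace * Real.exp (τ * (Xᵀ * Y).trace)
        + (τ * ((X * E)ᵀ * Y).trace + (Fᵀ * (X * E)).trace)
          * (Real.exp (τ * (Xᵀ * Y).trace) * (τ * (Xᵀ * (Y * E)).trace)) := by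
    unfold dirDeriv
    have hu : HasDerivAt (fun t : ℝ =>
        τ * ((X * E)ᵀ * (Y * NormedSpace.exp (t • E))).trace + (Fᵀ * (X * E)).trace)
        (τ * ((X * E)ᵀ * (Y * E)).trace) 0 :=
      ((hasDerivAt_traceMulExp (X * E)ᵀ Y E).const_mul τ).add_const _
    have hv : HasDerivAt (fun t : ℝ =>
        Real.exp (τ * (Xᵀ * (Y * NormedSpace.exp (t • E))).trace))
        (Real.exp (τ * (Xᵀ * (Y * NormedSpace.exp ((0:ℝ) • E))).trace)
          * (τ * (Xᵀ * (Y * E)).trace)) 0 :=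
      ((hasDerivAt_traceMulExp Xᵀ Y E).const_mul τ).exp
    have h := (hu.mul hv).deriv
    simp only [zero_smul, NormedSpace.exp_zero, mul_one] at h
    exact h
  rw [hd]
  ring

lemma traceE {N : ℕ} (A : Matrix (Fin N) (Fin N) ℝ) (i j : Fin N) :
    (Aᵀ * Eb N i j).trace = (Real.sqrt 2 / 2) * (A i j - A j i) := by
  simp only [Eb, Matrix.trace, Matrix.diag, Matrix.mul_apply, Matrix.smul_apply,
    Matrix.sub_apply, Matrix.transpose_apply, Matrix.single, smul_eq_mul,
    Matrix.of_apply, mul_sub, mul_ite, mul_one, mul_zero, Finset.mul_sum]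
  rw [Finset.sum_comm]
  simp [Finset.sum_sub_distrib, ite_and, Finset.sum_ite_eq,
    @eq_comm (Fin N) i, @eq_comm (Fin N) j]
  ring

lemma mulE_apply {N : ℕ} (M : Matrix (Fin N) (Fin N) ℝ) (i j a b : Fin N) :
    (M * Eb N i j) a b = (Real.sqrt 2 / 2) *
      ((if b = j then M a i else 0) - (if b = i then M a j else 0)) := by
  simp [Eb, Matrix.mul_apply, Matrix.single, ite_and, mul_sub,
    Finset.sum_sub_distrib, Finset.sum_ite_eq, Finset.sum_ite_eq',
    @eq_comm (Fin N) i, @eq_comm (Fin N) j]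
  simp [mul_comm]

lemma traceXEYE {N : ℕ} (X Y : Matrix (Fin N) (Fin N) ℝ) {i j : Fin N} (hij : i ≠ j) :
    ((X * Eb N i j)ᵀ * (Y * Eb N i j)).trace
      = ((Xᵀ * Y) i i + (Xᵀ * Y) j j) / 2 := by
  have h2 : Real.sqrt 2 * Real.sqrt 2 = 2 := Real.mul_self_sqrt (by norm_num)
  have e1 : (X * Eb N i j)ᵀ * (Y * Eb N i j) = ((Xᵀ * Y * Eb N i j)ᵀ * (Eb N i j))ᵀ := by
    simp [Matrix.transpose_mul, Matrix.mul_assoc]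
  rw [e1, Matrix.trace_transpose, traceE]
  rw [show Xᵀ * Y * Eb N i j = (Xᵀ * Y) * Eb N i j from rfl, mulE_apply, mulE_apply]
  simp [hij, hij.symm]
  field_simp
  ring_nf
  rw [sq, h2]
  ring

lemma sum_half {N : ℕ} (f : Fin N → Fin N → ℝ) (hsym : ∀ i j, f i j = f j i)
    (hdiag : ∀ i, f i i = 0) :
    ∑ i : Fin N, ∑ j : Fin N, (if i < j then f i j else 0)
      = (∑ i : Fin N, ∑ j : Fin N, f i j) / 2 := by
  have key : ∀ i j : Fin N, f i j
      = (if i < j then f i j else 0) + (if j < i then f i j else 0) := by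
    intro i j
    rcases lt_trichotomy i j with h | h | h
    · simp [h, not_lt_of_gt h]
    · simp [h, hdiag]
    · simp [h, not_lt_of_gt h]
  have hswap : ∑ i : Fin N, ∑ j : Fin N, (if j < i then f i j else 0)
      = ∑ i : Fin N, ∑ j : Fin N, (if i < j then f i j else 0) := by
    rw [Finset.sum_comm]
    refine Finset.sum_congr rfl fun i _ => Finset.sum_congr rfl fun j _ => ?_
    rw [hsym]
  have : ∑ i : Fin N, ∑ j : Fin N, f i j
      = ∑ i : Fin N, ∑ j : Fin N,
          ((if i < j then f i j else 0) + (if j < i then f i j else 0)) := by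
    refine Finset.sum_congr rfl fun i _ => Finset.sum_congr rfl fun j _ => key i j
  rw [this]
  simp only [Finset.sum_add_distrib, hswap]
  ring

lemma sum_diag_count {N : ℕ} (d : Fin N → ℝ) :
    ∑ i : Fin N, ∑ j : Fin N, (if i < j then d i + d j else 0)
      = ((N : ℝ) - 1) * ∑ i : Fin N, d i := by
  have h1 : ∑ i : Fin N, ∑ j : Fin N, (if i < j then d i + d j else 0)
      = ∑ i : Fin N, ∑ j : Fin N,
          (if i < j then (if i = j then 0 else d i + d j) else 0) := by
    refine Finset.sum_congr rfl fun i _ => Finset.sum_congr rfl fun j _ => ?_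
    by_cases h : i < j
    · simp [h, ne_of_lt h]
    · simp [h]
  rw [h1, sum_half (fun i j => if i = j then 0 else d i + d j)
    (fun i j => by by_cases h : i = j <;> simp [h, eq_comm, add_comm] )
    (fun i => by simp)]
  have h2 : ∀ i : Fin N, ∑ j : Fin N, (if i = j then 0 else d i + d j)
      = ((N : ℝ) * d i + ∑ j : Fin N, d j) - 2 * d i := by
    intro i
    have : ∀ j : Fin N, (if i = j then (0:ℝ) else d i + d j)
        = (d i + d j) - (if i = j then d i + d j else 0) := by
      intro j; by_cases h : i = j <;> simp [h]
    simp only [this, Finset.sum_sub_distrib, Finset.sum_add_distrib, Finset.sum_const,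
      Finset.card_univ, Fintype.card_fin, nsmul_eq_mul, Finset.sum_ite_eq, Finset.mem_univ,
      if_pos]
    ring
  rw [Finset.sum_congr rfl fun i _ => h2 i]
  simp only [Finset.sum_sub_distrib, Finset.sum_add_distrib, Finset.sum_const,
    Finset.card_univ, Fintype.card_fin, nsmul_eq_mul, Finset.mul_sum]
  ring_nf
  simp only [← Finset.sum_mul, ← Finset.mul_sum, Finset.sum_add_distrib]
  simp only [Finset.sum_sub_distrib, ← Finset.mul_sum]
  ring

lemma trace_skew {N : ℕ} (A B : Matrix (Fin N) (Fin N) ℝ) :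
    ((skewPart A)ᵀ * skewPart B).trace
      = ∑ i : Fin N, ∑ j : Fin N, (A i j - A j i) * (B i j - B j i) / 4 := by
  simp only [skewPart, Matrix.trace, Matrix.diag, Matrix.mul_apply, Matrix.smul_apply,
    Matrix.sub_apply, Matrix.transpose_apply, smul_eq_mul]
  rw [Finset.sum_comm]
  refine Finset.sum_congr rfl fun i _ => Finset.sum_congr rfl fun j _ => ?_
  ring

lemma SO_transpose_mul {N : ℕ} {X : Matrix (Fin N) (Fin N) ℝ}
    (hX : X ∈ Matrix.specialOrthogonalGroup (Fin N) ℝ) : Xᵀ * X = 1 := by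
  have h := (Matrix.mem_specialOrthogonalGroup_iff.mp hX).1
  have h' := (Matrix.mem_orthogonalGroup_iff' (Fin N) ℝ).mp h
  simpa [Matrix.star_eq_conjTranspose, Matrix.conjTranspose] using h'

/-!
STATEMENT 15 (Stein kernel for the von Mises–Fisher distribution on `SO(N)`).
For `p(X|F) ∝ exp(tr(FᵀX))` with parameter `F ∈ ℝ^{N×N}`, the Riemannian gradient of
`log p` at `X` is `X 𝒜(XᵀF)`, and
`k_p^{vMF}(X,Y) = c(X,Y) + tr[𝒜(Xᵀ(F+τY))ᵀ 𝒜(Yᵀ(F+τX))] e^{τ tr(XᵀY)}`,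
where `c(X,Y) = (τ/2)(N−1) tr(XᵀY) e^{τ tr(XᵀY)}`. -/
theorem kp_vMF_SON
    {N : ℕ} (τ : ℝ) (hτ : 0 < τ)
    (F : Matrix (Fin N) (Fin N) ℝ)
    -- the von Mises–Fisher density `p(X|F) ∝ exp(tr(FᵀX))`
    (p : Matrix (Fin N) (Fin N) ℝ → ℝ) (C : ℝ) (hC : 0 < C)
    (hp : ∀ X, p X = C * Real.exp ((Fᵀ * X).trace)) :
    -- the Riemannian gradient of `log p` at `X` is `X 𝒜(XᵀF)` …
    (∀ X ∈ Matrix.specialOrthogonalGroup (Fin N) ℝ, ∀ i j : Fin N,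
      dirDeriv (fun Z => Real.log (p Z)) (Eb N i j) X =
        ((X * skewPart (Xᵀ * F))ᵀ * (X * Eb N i j)).trace) ∧
    -- … and the Stein kernel has the stated closed form
    (∀ X ∈ Matrix.specialOrthogonalGroup (Fin N) ℝ,
     ∀ Y ∈ Matrix.specialOrthogonalGroup (Fin N) ℝ,
      kpSON τ p X Y =
        cSON τ X Y +
        ((skewPart (Xᵀ * (F + τ • Y)))ᵀ * skewPart (Yᵀ * (F + τ • X))).trace *
          Real.exp (τ * (Xᵀ * Y).trace)) := by
  constructor
  · intro X hX i j
    have hXO := SO_transpose_mul hX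
    rw [dirDeriv_logp F p C hC hp]
    have e1 : (X * skewPart (Xᵀ * F))ᵀ * (X * Eb N i j)
        = (skewPart (Xᵀ * F))ᵀ * Eb N i j := by
      rw [Matrix.transpose_mul]
      calc (skewPart (Xᵀ * F))ᵀ * Xᵀ * (X * Eb N i j)
          = (skewPart (Xᵀ * F))ᵀ * (Xᵀ * X * Eb N i j) := by
            rw [Matrix.mul_assoc, Matrix.mul_assoc]
        _ = (skewPart (Xᵀ * F))ᵀ * Eb N i j := by rw [hXO, Matrix.one_mul]
    have e2 : Fᵀ * (X * Eb N i j) = (Xᵀ * F)ᵀ * Eb N i j := by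
      rw [Matrix.transpose_mul, Matrix.transpose_transpose, Matrix.mul_assoc]
    rw [e1, e2, traceE, traceE]
    simp [skewPart, Matrix.sub_apply, Matrix.smul_apply, Matrix.transpose_apply]
    have hswap : ∀ a b : Fin N, (Fᵀ * X) a b = (Xᵀ * F) b a := by
      intro a b
      simp [Matrix.mul_apply, Matrix.transpose_apply, mul_comm]
    rw [hswap i j, hswap j i]
    ring
  · intro X _ Y _
    have hs2 : Real.sqrt 2 * Real.sqrt 2 = 2 := Real.mul_self_sqrt (by norm_num)
    set P := Xᵀ * (F + τ • Y) with hP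
    set Q := Yᵀ * (F + τ • X) with hQ
    set e0 := Real.exp (τ * (Xᵀ * Y).trace) with he0
    have hterm : ∀ i j : Fin N,
        (if i < j then
          steinSON p i j (fun Y' => steinSON p i j (fun X' => kSON τ X' Y') X) Y
        else 0)
        = (if i < j then (Xᵀ * Y) i i + (Xᵀ * Y) j j else 0) * (τ / 2) * e0
          + (if i < j then (P i j - P j i) * (Q i j - Q j i) else 0) * (1 / 2) * e0 := by
      intro i j
      by_cases h : i < j
      · simp only [if_pos h]
        rw [term_eq τ F p C hC hp i j X Y, traceXEYE X Y (ne_of_lt h)]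
        have e2 : Fᵀ * (X * Eb N i j) = (Xᵀ * F)ᵀ * Eb N i j := by
          rw [Matrix.transpose_mul, Matrix.transpose_transpose, Matrix.mul_assoc]
        have e4 : Fᵀ * (Y * Eb N i j) = (Yᵀ * F)ᵀ * Eb N i j := by
          rw [Matrix.transpose_mul, Matrix.transpose_transpose, Matrix.mul_assoc]
        have e1 : ((X * Eb N i j)ᵀ * Y).trace = ((Xᵀ * Y)ᵀ * Eb N i j).trace := by
          rw [tr_transp, Matrix.transpose_mul, Matrix.transpose_transpose, Matrix.mul_assoc]
        have e3 : Xᵀ * (Y * Eb N i j) = (Yᵀ * X)ᵀ * Eb N i j := by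
          rw [Matrix.transpose_mul, Matrix.transpose_transpose, Matrix.mul_assoc]
        rw [e1, e2, e3, e4, traceE, traceE, traceE, traceE]
        have hPij : ∀ a b : Fin N, P a b = (Xᵀ * F) a b + τ * (Xᵀ * Y) a b := by
          intro a b
          simp [hP, Matrix.mul_add, Matrix.add_apply, Matrix.mul_smul, Matrix.smul_apply]
        have hQij : ∀ a b : Fin N, Q a b = (Yᵀ * F) a b + τ * (Yᵀ * X) a b := by
          intro a b
          simp [hQ, Matrix.mul_add, Matrix.add_apply, Matrix.mul_smul, Matrix.smul_apply]
        rw [hPij i j, hPij j i, hQij i j, hQij j i]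
        have hMswap : ∀ a b : Fin N, (Yᵀ * X) a b = (Xᵀ * Y) b a := by
          intro a b
          simp [Matrix.mul_apply, Matrix.transpose_apply, mul_comm]
        rw [hMswap i j, hMswap j i]
        rw [he0]
        field_simp
        ring_nf
        rw [sq, hs2]
        ring
      · simp [h]
    unfold kpSON
    rw [Finset.sum_congr rfl fun i _ => Finset.sum_congr rfl fun j _ => hterm i j]
    simp only [Finset.sum_add_distrib, ← Finset.sum_mul]
    rw [sum_diag_count (fun i => (Xᵀ * Y) i i)]
    rw [sum_half (fun i j => (P i j - P j i) * (Q i j - Q j i))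
      (fun i j => by ring) (fun i => by ring)]
    rw [trace_skew]
    simp only [← Finset.sum_div, cSON]
    have htr : (Xᵀ * Y).trace = ∑ i : Fin N, (Xᵀ * Y) i i := by
      simp [Matrix.trace, Matrix.diag]
    rw [← htr]
    ring
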